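/- Let α > 0, β ∈ (0,1), σ > 1 with βσ < 1. Then for every x > 0 there exists a unique μ ∈ ((σ−1)/σ, 1−β) such that μ·[(1−βσ)/(1−σ(1−μ))]^{β−1/σ}·[(1/α)·(1−β−μ)/(1−σ(1−μ))]^{−β} = x. (Existence and uniqueness of the markup function in Case 1a with σ > 1.) -/

import Mathlib

open Real Filter Set Topology

lemma markup_key_eq (α β σ μ : ℝ) (hα : 0 < α) (ht : 0 < 1 - σ*(1-μ)) (hs : 0 < 1-β-μ)
    (hβσ : 0 < 1-β*σ) :
    μ * ((1 - β * σ) / (1 - σ * (1 - μ))) ^ (β - 1/σ) *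
      ((1/α) * (1 - β - μ) / (1 - σ * (1 - μ))) ^ (-β)
    = ((1-β*σ)^(β-1/σ) * α^β) * (μ * (1 - σ*(1-μ))^(1/σ) * (1-β-μ)^(-β)) := by
  set t := 1 - σ*(1-μ) with htdef
  set s := 1 - β - μ with hsdef
  have h1 : (1/α) * s / t = s / (α * t) := by field_simp
  have htβ : t^β = t^(β-1/σ) * t^(1/σ) := by
    rw [← Real.rpow_add ht]; ring_nf
  rw [h1, Real.rpow_neg (by positivity), Real.rpow_neg hs.le,
    Real.div_rpow hs.le (by positivity), Real.mul_rpow hα.le ht.le,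
    Real.div_rpow hβσ.le ht.le]
  have hte : (0:ℝ) < t^(β-1/σ) := Real.rpow_pos_of_pos ht _
  have hsβ : (0:ℝ) < s^β := Real.rpow_pos_of_pos hs _
  have hαβ : (0:ℝ) < α^β := Real.rpow_pos_of_pos hα _
  have ht1 : (0:ℝ) < t^(1/σ) := Real.rpow_pos_of_pos ht _
  field_simp
  rw [htβ]; ring

/-- Existence and uniqueness of the inverse markup in Case 1a
with `σ > 1`: for every `x > 0` there is a unique `μ ∈ ((σ−1)/σ, 1−β)`
solving the first-order condition. -/
theorem markup_exists_unique_case1a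
    (α β σ : ℝ) (hα : 0 < α) (hβ : β ∈ Set.Ioo (0:ℝ) 1) (hσ : 1 < σ)
    (hβσ : β * σ < 1) :
    ∀ x : ℝ, 0 < x →
      ∃! μ : ℝ, μ ∈ Set.Ioo ((σ - 1) / σ) (1 - β) ∧
        μ * ((1 - β * σ) / (1 - σ * (1 - μ))) ^ (β - 1/σ) *
          ((1/α) * (1 - β - μ) / (1 - σ * (1 - μ))) ^ (-β) = x := by
  obtain ⟨hβ0, hβ1⟩ := hβ
  intro x hx
  have hσ0 : 0 < σ := lt_trans one_pos hσ
  set a := (σ-1)/σ with hadef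
  set b := 1-β with hbdef
  have hβσ' : (0:ℝ) < 1 - β*σ := by linarith
  have ha0 : 0 < a := div_pos (by linarith) hσ0
  have hab : a < b := by
    rw [hadef, hbdef, div_lt_iff₀ hσ0]; nlinarith
  have htpos : ∀ μ ∈ Set.Ioo a b, 0 < 1 - σ*(1-μ) := by
    intro μ hμ
    have h1 : σ - 1 < σ * μ := by
      have := (div_lt_iff₀ hσ0).mp hμ.1
      linarith [this]
    nlinarith
  have hspos : ∀ μ ∈ Set.Ioo a b, 0 < 1 - β - μ := by
    intro μ hμ; have := hμ.2; rw [hbdef] at this; linarith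
  have hμpos : ∀ μ ∈ Set.Ioo a b, 0 < μ := fun μ hμ => lt_trans ha0 hμ.1
  set C := (1-β*σ)^(β-1/σ) * α^β with hCdef
  have hC : 0 < C := mul_pos (Real.rpow_pos_of_pos hβσ' _) (Real.rpow_pos_of_pos hα _)
  set g : ℝ → ℝ := fun μ => C * (μ * (1 - σ*(1-μ))^(1/σ) * (1-β-μ)^(-β)) with hgdef
  have hEq : ∀ μ ∈ Set.Ioo a b,
      μ * ((1 - β * σ) / (1 - σ * (1 - μ))) ^ (β - 1/σ) *
        ((1/α) * (1 - β - μ) / (1 - σ * (1 - μ))) ^ (-β) = g μ := by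
    intro μ hμ
    exact markup_key_eq α β σ μ hα (htpos μ hμ) (hspos μ hμ) hβσ'
  -- strict monotonicity
  have hmono : StrictMonoOn g (Set.Ioo a b) := by
    intro μ₁ h₁ μ₂ h₂ hlt
    have ht₁ := htpos μ₁ h₁
    have ht₂ := htpos μ₂ h₂
    have hs₁ := hspos μ₁ h₁
    have hs₂ := hspos μ₂ h₂
    have hμ₁ := hμpos μ₁ h₁
    have key1 : μ₁ * (1 - σ*(1-μ₁))^(1/σ) < μ₂ * (1 - σ*(1-μ₂))^(1/σ) := by
      have hpow : (1 - σ*(1-μ₁))^(1/σ) < (1 - σ*(1-μ₂))^(1/σ) :=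
        Real.rpow_lt_rpow ht₁.le (by nlinarith) (by positivity)
      exact mul_lt_mul'' hlt hpow hμ₁.le (Real.rpow_pos_of_pos ht₁ _).le
    have key2 : (1-β-μ₁)^(-β) < (1-β-μ₂)^(-β) := by
      rw [Real.rpow_neg hs₁.le, Real.rpow_neg hs₂.le]
      have : (1-β-μ₂)^β < (1-β-μ₁)^β :=
        Real.rpow_lt_rpow hs₂.le (by linarith) hβ0
      exact inv_strictAnti₀ (Real.rpow_pos_of_pos hs₂ _) this
    have hA : 0 ≤ μ₁ * (1 - σ*(1-μ₁))^(1/σ) := by positivity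
    have hB : 0 ≤ (1-β-μ₁)^(-β) := Real.rpow_nonneg hs₁.le _
    exact mul_lt_mul_of_pos_left (mul_lt_mul'' key1 key2 hA hB) hC
  -- continuity away from b
  have hco : ∀ μ : ℝ, μ ≠ b → ContinuousAt g μ := by
    intro μ hμ
    have h1 : ContinuousAt (fun μ : ℝ => (1 - σ*(1-μ))^(1/σ)) μ := by
      apply ContinuousAt.rpow_const (by fun_prop)
      right; positivity
    have h2 : ContinuousAt (fun μ : ℝ => (1-β-μ)^(-β)) μ := by
      apply ContinuousAt.rpow_const (by fun_prop)
      left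
      intro h
      apply hμ
      rw [hbdef]; linarith [sub_eq_zero.mp h]
    exact continuousAt_const.mul ((continuousAt_id.mul h1).mul h2)
  -- value / limit at a
  have hta : 1 - σ*(1-a) = 0 := by rw [hadef]; field_simp; ring
  have gA : g a = 0 := by
    simp only [hgdef, hta, Real.zero_rpow (by positivity : (1:ℝ)/σ ≠ 0)]
    ring
  have tA : Tendsto g (𝓝[Set.Ioo a b] a) (𝓝 0) := by
    have := (hco a hab.ne).tendsto
    rw [gA] at this
    exact this.mono_left nhdsWithin_le_nhds
  have : (𝓝[Set.Ioo a b] a).NeBot := left_nhdsWithin_Ioo_neBot hab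
  obtain ⟨c, hgc, hc⟩ :=
    ((tA.eventually_lt_const hx).and eventually_mem_nhdsWithin).exists
  -- limit at b
  have hs0 : Tendsto (fun μ : ℝ => 1-β-μ) (𝓝[Set.Ioo a b] b) (𝓝[>] 0) := by
    apply tendsto_nhdsWithin_of_tendsto_nhds_of_eventually_within
    · have : Tendsto (fun μ : ℝ => 1-β-μ) (𝓝 b) (𝓝 (1-β-b)) :=
        ((continuous_const.sub continuous_id).tendsto b)
      rw [show 1-β-b = 0 by rw [hbdef]; ring] at this
      exact this.mono_left nhdsWithin_le_nhds
    · exact eventually_mem_nhdsWithin.mono fun μ hμ => hspos μ hμ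
  have hsb : Tendsto (fun s : ℝ => s^β) (𝓝[>] 0) (𝓝[>] 0) := by
    apply tendsto_nhdsWithin_of_tendsto_nhds_of_eventually_within
    · have h0 : ContinuousAt (fun s : ℝ => s^β) 0 :=
        continuousAt_id.rpow_const (Or.inr hβ0.le)
      have := h0.tendsto
      rw [Real.zero_rpow hβ0.ne'] at this
      exact this.mono_left nhdsWithin_le_nhds
    · exact eventually_mem_nhdsWithin.mono fun s hs => Real.rpow_pos_of_pos hs _
  have hinv : Tendsto (fun μ : ℝ => ((1-β-μ)^β)⁻¹) (𝓝[Set.Ioo a b] b) atTop :=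
    (hsb.comp hs0).inv_tendsto_nhdsGT_zero
  have hfront : Tendsto (fun μ : ℝ => C * (μ * (1 - σ*(1-μ))^(1/σ)))
      (𝓝[Set.Ioo a b] b) (𝓝 (C * (b * (1 - σ*(1-b))^(1/σ)))) := by
    have h1 : ContinuousAt (fun μ : ℝ => C * (μ * (1 - σ*(1-μ))^(1/σ))) b := by
      refine continuousAt_const.mul (continuousAt_id.mul ?_)
      exact ContinuousAt.rpow_const (by fun_prop) (Or.inr (by positivity))
    exact h1.tendsto.mono_left nhdsWithin_le_nhds
  have htb : 0 < 1 - σ*(1-b) := by rw [hbdef]; nlinarith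
  have hLpos : 0 < C * (b * (1 - σ*(1-b))^(1/σ)) := by
    have hb0 : 0 < b := lt_trans ha0 hab
    have := Real.rpow_pos_of_pos htb (1/σ)
    positivity
  have tB : Tendsto g (𝓝[Set.Ioo a b] b) atTop := by
    have hmul := hfront.pos_mul_atTop hLpos hinv
    refine hmul.congr' ?_
    filter_upwards [eventually_mem_nhdsWithin] with μ hμ
    rw [hgdef]
    simp only
    rw [Real.rpow_neg (hspos μ hμ).le]
    ring
  have : (𝓝[Set.Ioo a b] b).NeBot := right_nhdsWithin_Ioo_neBot hab
  obtain ⟨d, hgd, hd⟩ :=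
    ((tB.eventually_gt_atTop x).and eventually_mem_nhdsWithin).exists
  -- c < d
  have hcd : c < d := by
    by_contra h
    push_neg at h
    rcases eq_or_lt_of_le h with h | h
    · subst h; linarith
    · have := hmono hd hc h; linarith
  -- IVT
  have hsub : Set.Icc c d ⊆ Set.Ioo a b := Set.Icc_subset_Ioo hc.1 hd.2
  have hcont : ContinuousOn g (Set.Icc c d) := fun μ hμ =>
    (hco μ (ne_of_lt (hsub hμ).2)).continuousWithinAt
  obtain ⟨μ, hμcd, hgμ⟩ := intermediate_value_Ioo hcd.le hcont ⟨hgc, hgd⟩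
  have hμab : μ ∈ Set.Ioo a b := hsub (Set.Ioo_subset_Icc_self hμcd)
  refine ⟨μ, ⟨hμab, by rw [hEq μ hμab]; exact hgμ⟩, ?_⟩
  rintro ν ⟨hν, hνeq⟩
  rw [hEq ν hν] at hνeq
  exact hmono.injOn hν hμab (hνeq.trans hgμ.symm)
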